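/- Fix d ≥ 2 and δ ∈ (0,1). With F(p) := sSup { tr[J·Q₂^{T₃}]/p : J a positive semidefinite d³×d³ matrix with tr₃[J] ≤ I_{d²} and tr[J·R₂] = p }, the function F is non-increasing on (0,1): for all 0 < p ≤ q < 1, F(q) ≤ F(p). (Monotonicity of the maximal universal fidelity in the success probability, from the proof of Proposition 2.) -/

import Mathlib

open Matrix ComplexOrder

/-- Permutation matrix on `(ℂ^d)^{⊗n}` permuting tensor factors. -/
noncomputable def permMat (n d : ℕ) (σ : Equiv.Perm (Fin n)) :
    Matrix (Fin n → Fin d) (Fin n → Fin d) ℂ :=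
  Matrix.of fun v w => if v = w ∘ σ then 1 else 0

/-- Projector onto the symmetric subspace of `(ℂ^d)^{⊗n}`. -/
noncomputable def symProj (n d : ℕ) :
    Matrix (Fin n → Fin d) (Fin n → Fin d) ℂ :=
  ((n.factorial : ℂ)⁻¹) • ∑ σ : Equiv.Perm (Fin n), permMat n d σ

/-- `M ⊗ I_d`: a matrix on the first two tensor factors, tensored with the
identity on the third factor. -/
noncomputable def tid {d : ℕ} (M : Matrix (Fin 2 → Fin d) (Fin 2 → Fin d) ℂ) :
    Matrix (Fin 3 → Fin d) (Fin 3 → Fin d) ℂ :=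
  Matrix.of fun v w =>
    M (fun i => v i.castSucc) (fun i => w i.castSucc) * (if v 2 = w 2 then 1 else 0)

/-- Partial transpose with respect to the third tensor factor. -/
noncomputable def pt3 {d : ℕ} (M : Matrix (Fin 3 → Fin d) (Fin 3 → Fin d) ℂ) :
    Matrix (Fin 3 → Fin d) (Fin 3 → Fin d) ℂ :=
  Matrix.of fun v w => M (Function.update v 2 (w 2)) (Function.update w 2 (v 2))

/-- Partial trace over the third tensor factor. -/
noncomputable def ptr3 {d : ℕ} (M : Matrix (Fin 3 → Fin d) (Fin 3 → Fin d) ℂ) :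
    Matrix (Fin 2 → Fin d) (Fin 2 → Fin d) ℂ :=
  Matrix.of fun v w => ∑ k : Fin d, M (Fin.snoc v k) (Fin.snoc w k)

/-- `D(n,d) = binom(n+d−1, n)`, the dimension of the symmetric subspace. -/
noncomputable def Dnd (n d : ℕ) : ℝ := (Nat.choose (n + d - 1) n : ℝ)

/-- `λ₀ = 1 − (d−1)δ/d`, the top eigenvalue of the depolarized state. -/
noncomputable def lam0 (d : ℕ) (δ : ℝ) : ℝ := 1 - ((d : ℝ) - 1) * δ / d

/-- `p₂ = (1 + tr[Λ²])/2` for `Λ = Diag(λ₀, δ/d, …, δ/d)`. -/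
noncomputable def pTwo (d : ℕ) (δ : ℝ) : ℝ :=
  (1 + (lam0 d δ ^ 2 + ((d : ℝ) - 1) * (δ / d) ^ 2)) / 2

/-- `f₂ = (λ₀ + λ₀²)/(2 p₂)`. -/
noncomputable def fTwo (d : ℕ) (δ : ℝ) : ℝ :=
  (lam0 d δ + lam0 d δ ^ 2) / (2 * pTwo d δ)

/-- Closed form of the Haar average `R₂ = ∫ ρ_ψ^{⊗2} ⊗ I dψ`
`= ((1−δ)²·Π₂/D(2,d) + ((2δ−δ²)/d²)·I_{d²}) ⊗ I_d`. -/
noncomputable def R2 (d : ℕ) (δ : ℝ) :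
    Matrix (Fin 3 → Fin d) (Fin 3 → Fin d) ℂ :=
  tid ((((1 - δ) ^ 2 / Dnd 2 d : ℝ) : ℂ) • symProj 2 d
    + (((2 * δ - δ ^ 2) / (d : ℝ) ^ 2 : ℝ) : ℂ) • (1 : Matrix (Fin 2 → Fin d) (Fin 2 → Fin d) ℂ))

/-- Closed form of the partial transpose `Q₂^{T₃}` of the Haar average
`Q₂ = ∫ ρ_ψ^{⊗2} ⊗ |ψ⟩⟨ψ| dψ`:
`Q₂^{T₃} = (1−δ)³·Π₃^{T₃}/D(3,d) + (2(1−δ)²δ/d)·(Π₂/D(2,d))⊗I_d + ((3δ−2δ²)/d²)·I_{d³}`. -/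
noncomputable def Q2T3 (d : ℕ) (δ : ℝ) :
    Matrix (Fin 3 → Fin d) (Fin 3 → Fin d) ℂ :=
  (((1 - δ) ^ 3 / Dnd 3 d : ℝ) : ℂ) • pt3 (symProj 3 d)
    + ((2 * (1 - δ) ^ 2 * δ / (d : ℝ) : ℝ) : ℂ) • tid ((((Dnd 2 d)⁻¹ : ℝ) : ℂ) • symProj 2 d)
    + (((3 * δ - 2 * δ ^ 2) / (d : ℝ) ^ 2 : ℝ) : ℂ) • (1 : Matrix (Fin 3 → Fin d) (Fin 3 → Fin d) ℂ)

/-- The SDP value `F(p)`: the supremum of `tr[J·Q₂^{T₃}]/p` over positive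
semidefinite `J` with `tr₃[J] ≤ I_{d²}` (Loewner order) and `tr[J·R₂] = p`;
it equals the maximal universal fidelity `F_Depo(2,p)`. -/
noncomputable def Fsdp (d : ℕ) (δ : ℝ) (p : ℝ) : ℝ :=
  sSup {x : ℝ | ∃ J : Matrix (Fin 3 → Fin d) (Fin 3 → Fin d) ℂ,
      J.PosSemidef ∧
      ((1 : Matrix (Fin 2 → Fin d) (Fin 2 → Fin d) ℂ) - ptr3 J).PosSemidef ∧
      (J * R2 d δ).trace = (p : ℂ) ∧
      x = ((J * Q2T3 d δ).trace).re / p}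

section AuxStmt10
set_option linter.unusedSectionVars false

variable {n : Type*} [Fintype n] [DecidableEq n]

lemma aux_psd_smul {M : Matrix n n ℂ} (hM : M.PosSemidef) {c : ℝ} (hc : 0 ≤ c) :
    ((c : ℂ) • M).PosSemidef := by
  refine PosSemidef.of_dotProduct_mulVec_nonneg ?_ (fun x => ?_)
  · have h := hM.1
    unfold Matrix.IsHermitian at *
    rw [conjTranspose_smul, h]
    simp [Complex.star_def, Complex.conj_ofReal]
  · rw [smul_mulVec, dotProduct_smul, smul_eq_mul]
    exact mul_nonneg (Complex.zero_le_real.mpr hc) (hM.dotProduct_mulVec_nonneg x)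

lemma aux_psd_diag {M : Matrix n n ℂ} (hM : M.PosSemidef) (v : n) : 0 ≤ M v v := by
  have h := hM.dotProduct_mulVec_nonneg (Pi.single v 1)
  simpa [Matrix.mulVec_single, single_dotProduct, ← Pi.single_star] using h

lemma aux_psd_diag_re {M : Matrix n n ℂ} (hM : M.PosSemidef) (v : n) : 0 ≤ (M v v).re := by
  have h := Complex.le_def.mp (aux_psd_diag hM v)
  simpa using h.1

lemma aux_psd_offdiag {M : Matrix n n ℂ} (hM : M.PosSemidef) (v w : n) :
    ‖M v w‖ ≤ ((M v v).re + (M w w).re) / 2 := by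
  have hdv := aux_psd_diag_re hM v
  have hdw := aux_psd_diag_re hM w
  rcases eq_or_ne (M v w) 0 with h0 | h0
  · rw [h0]; simp; linarith
  set A : ℝ := ‖M v w‖ with hA
  have hA0 : A ≠ 0 := by simpa [hA] using h0
  set c : ℂ := -(A : ℂ) / M v w with hc
  have h1 : c * M v w = -(A : ℂ) := div_mul_cancel₀ _ h0
  have hwv : M w v = star (M v w) := hM.1.apply w v |>.symm
  have h2 : star c * M w v = -(A : ℂ) := by
    rw [hwv, ← star_mul', h1]
    simp [Complex.star_def, Complex.conj_ofReal]
  have habs : ‖c‖ = 1 := by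
    rw [hc, norm_div, norm_neg, Complex.norm_real, Real.norm_eq_abs,
      abs_of_nonneg (by positivity : (0:ℝ) ≤ A), ← hA]
    field_simp
  have h3 : star c * c = 1 := by
    rw [Complex.star_def, mul_comm, Complex.mul_conj, Complex.normSq_eq_norm_sq, habs]
    norm_num
  set x : n → ℂ := Pi.single v 1 + Pi.single w c with hx
  have hdot : star x ⬝ᵥ M *ᵥ x
      = M v v + c * M v w + star c * M w v + (star c * c) * M w w := by
    rw [hx]
    simp only [star_add, ← Pi.single_star, star_one, Matrix.mulVec_add,
      Matrix.mulVec_single, add_dotProduct, dotProduct_add,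
      single_dotProduct, Pi.add_apply, Pi.smul_apply, op_smul_eq_mul, Matrix.col_apply]
    ring
  have h4 := Complex.le_def.mp (hM.dotProduct_mulVec_nonneg x)
  rw [hdot, h1, h2, h3] at h4
  have h5 := h4.1
  simp [Complex.add_re, Complex.sub_re] at h5
  linarith

lemma aux_ptr3_smul {d : ℕ} (c : ℂ) (M : Matrix (Fin 3 → Fin d) (Fin 3 → Fin d) ℂ) :
    ptr3 (c • M) = c • ptr3 M := by
  ext v w
  simp [ptr3, Finset.mul_sum]

lemma aux_snoc_inj {d : ℕ} (v w : Fin 2 → Fin d) (k : Fin d) :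
    (Fin.snoc v k : Fin 3 → Fin d) = Fin.snoc w k ↔ v = w := by
  constructor
  · intro h
    funext i
    have := congrFun h i.castSucc
    simpa [Fin.snoc_castSucc] using this
  · rintro rfl; rfl

lemma aux_ptr3_one {d : ℕ} :
    ptr3 (1 : Matrix (Fin 3 → Fin d) (Fin 3 → Fin d) ℂ) = (d : ℂ) • 1 := by
  ext v w
  rcases eq_or_ne v w with rfl | hvw
  · simp [ptr3, Matrix.one_apply]
  · simp [ptr3, Matrix.one_apply, aux_snoc_inj, hvw]

lemma aux_trace_permMat_one (d : ℕ) : (permMat 2 d 1).trace = ((d : ℂ))^2 := by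
  unfold Matrix.trace permMat
  simp [Matrix.diag]

lemma aux_trace_permMat_swap (d : ℕ) :
    (permMat 2 d (Equiv.swap 0 1)).trace = (d : ℂ) := by
  unfold Matrix.trace permMat
  have key : ∀ v : Fin 2 → Fin d, (v = v ∘ (Equiv.swap (0:Fin 2) 1)) ↔ v 0 = v 1 := by
    intro v
    constructor
    · intro h
      have := congrFun h 0
      simpa using this
    · intro h
      funext i
      fin_cases i <;> simp [h]
  simp only [Matrix.diag, Matrix.of_apply]
  rw [Finset.sum_congr rfl (fun v _ => by rw [if_congr (key v) rfl rfl])]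
  rw [← Fintype.sum_equiv (finTwoArrowEquiv (Fin d)).symm
      (fun p : Fin d × Fin d => if p.1 = p.2 then (1:ℂ) else 0)
      (fun v => if v 0 = v 1 then (1:ℂ) else 0) (fun p => by simp [finTwoArrowEquiv])]
  rw [Fintype.sum_prod_type]
  simp

lemma aux_trace_symProj2 (d : ℕ) :
    (symProj 2 d).trace = ((((d:ℂ))^2 + d) / 2) := by
  unfold symProj
  rw [Matrix.trace_smul]
  rw [show (Finset.univ : Finset (Equiv.Perm (Fin 2))) = {1, Equiv.swap 0 1} from by decide]
  rw [Finset.sum_pair (by decide : (1 : Equiv.Perm (Fin 2)) ≠ Equiv.swap 0 1)]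
  rw [Matrix.trace_add, aux_trace_permMat_one, aux_trace_permMat_swap]
  have : ((Nat.factorial 2 : ℂ)) = 2 := by norm_num [Nat.factorial]
  rw [this, smul_eq_mul]
  ring

lemma aux_trace_tid {d : ℕ} (M : Matrix (Fin 2 → Fin d) (Fin 2 → Fin d) ℂ) :
    (tid M).trace = (d : ℂ) * M.trace := by
  have h : (tid M).trace
      = ∑ u : Fin 3 → Fin d, M (fun i => u i.castSucc) (fun i => u i.castSucc) := by
    unfold Matrix.trace tid
    simp [Matrix.diag]
  rw [h]
  rw [Fintype.sum_equiv ((Fin.snocEquiv (fun _ : Fin 3 => Fin d)).symm)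
      (fun u => M (fun i => u i.castSucc) (fun i => u i.castSucc))
      (fun x => M x.2 x.2) (fun u => rfl)]
  rw [Fintype.sum_prod_type]
  simp [Finset.sum_const, Finset.card_univ, mul_comm, Matrix.trace, Matrix.diag]

lemma aux_Dnd2 {d : ℕ} (hd : 1 ≤ d) : Dnd 2 d = (((d:ℝ))^2 + d) / 2 := by
  unfold Dnd
  have h1 : 2 + d - 1 = d + 1 := by omega
  rw [h1, Nat.choose_two_right]
  rw [Nat.add_sub_cancel]
  have hdvd : 2 ∣ (d + 1) * d := by
    rcases Nat.even_or_odd d with he | ho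
    · exact Dvd.dvd.mul_left he.two_dvd _
    · exact Dvd.dvd.mul_right (ho.add_one).two_dvd _
  rw [Nat.cast_div hdvd (by norm_num)]
  push_cast
  ring

lemma aux_trace_R2 {d : ℕ} (hd : 1 ≤ d) (δ : ℝ) : (R2 d δ).trace = (d : ℂ) := by
  unfold R2
  rw [aux_trace_tid, Matrix.trace_add, Matrix.trace_smul, Matrix.trace_smul,
    aux_trace_symProj2, Matrix.trace_one, aux_Dnd2 hd]
  have hd0 : (d:ℝ) ≠ 0 := by positivity
  have hcard : (Fintype.card (Fin 2 → Fin d) : ℂ) = ((d:ℂ))^2 := by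
    simp [Fintype.card_fun]
  rw [hcard]
  have hA : (((d:ℝ)^2 + d)/2 : ℝ) ≠ 0 := by positivity
  have hdC' : (d:ℂ) ≠ 0 := by exact_mod_cast hd0
  have hAC : ((d:ℂ)^2 + d) ≠ 0 := by exact_mod_cast (by positivity : ((d:ℝ)^2 + d) ≠ 0)
  have hAC2 : ((d:ℂ) + d^2) ≠ 0 := by rw [add_comm]; exact hAC
  push_cast
  simp only [smul_eq_mul]
  field_simp
  ring

lemma aux_diag_le_one {d : ℕ} {J : Matrix (Fin 3 → Fin d) (Fin 3 → Fin d) ℂ}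
    (hJ : J.PosSemidef)
    (hJ2 : ((1 : Matrix (Fin 2 → Fin d) (Fin 2 → Fin d) ℂ) - ptr3 J).PosSemidef)
    (u : Fin 3 → Fin d) : (J u u).re ≤ 1 := by
  set a : Fin 2 → Fin d := Fin.init u with ha
  have h := aux_psd_diag_re hJ2 a
  have hval : ((1 : Matrix (Fin 2 → Fin d) (Fin 2 → Fin d) ℂ) - ptr3 J) a a
      = 1 - ∑ k : Fin d, J (Fin.snoc a k) (Fin.snoc a k) := by
    simp [ptr3, Matrix.sub_apply, Matrix.one_apply_eq]
  rw [hval] at h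
  have hre : ((1 : ℂ) - ∑ k : Fin d, J (Fin.snoc a k) (Fin.snoc a k)).re
      = 1 - ∑ k : Fin d, (J (Fin.snoc a k) (Fin.snoc a k)).re := by
    simp [Complex.sub_re, Complex.re_sum]
  rw [hre] at h
  have hterm : (J (Fin.snoc a (u (Fin.last 2))) (Fin.snoc a (u (Fin.last 2)))).re
      ≤ ∑ k : Fin d, (J (Fin.snoc a k) (Fin.snoc a k)).re :=
    Finset.single_le_sum (fun k _ => aux_psd_diag_re hJ (Fin.snoc a k)) (Finset.mem_univ _)
  have hu : (Fin.snoc a (u (Fin.last 2)) : Fin 3 → Fin d) = u := by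
    rw [ha]; exact Fin.snoc_init_self u
  rw [hu] at hterm
  linarith

lemma aux_entry_le_one {d : ℕ} {J : Matrix (Fin 3 → Fin d) (Fin 3 → Fin d) ℂ}
    (hJ : J.PosSemidef)
    (hJ2 : ((1 : Matrix (Fin 2 → Fin d) (Fin 2 → Fin d) ℂ) - ptr3 J).PosSemidef)
    (v w : Fin 3 → Fin d) : ‖J v w‖ ≤ 1 := by
  have h := aux_psd_offdiag hJ v w
  have h1 := aux_diag_le_one hJ hJ2 v
  have h2 := aux_diag_le_one hJ hJ2 w
  linarith

end AuxStmt10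

/-- monotonicity, from the proof of Proposition 2. For `d ≥ 2`
and `δ ∈ (0,1)`, the maximal universal fidelity `F` is non-increasing on `(0,1)`:
for all `0 < p ≤ q < 1`, `F(q) ≤ F(p)`. -/
theorem stmt10 (d : ℕ) (hd : 2 ≤ d) (δ : ℝ) (hδ : δ ∈ Set.Ioo (0 : ℝ) 1)
    (p q : ℝ) (hp : 0 < p) (hpq : p ≤ q) (hq : q < 1) :
    Fsdp d δ q ≤ Fsdp d δ p := by
  obtain ⟨hδ0, hδ1⟩ := hδ
  have hq0 : 0 < q := lt_of_lt_of_le hp hpq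
  have hd1 : 1 ≤ d := le_trans (by norm_num) hd
  have hdR : (0:ℝ) < d := by exact_mod_cast Nat.pos_of_ne_zero (by omega)
  have hdC : ((d:ℝ):ℂ) ≠ 0 := by
    exact_mod_cast Complex.ofReal_ne_zero.mpr (ne_of_gt hdR)
  unfold Fsdp
  apply csSup_le_csSup
  · -- the `p` feasible set is bounded above
    refine ⟨(∑ v : Fin 3 → Fin d, ∑ w : Fin 3 → Fin d, ‖Q2T3 d δ w v‖) / p, ?_⟩
    rintro x ⟨J, hJ1, hJ2, _, rfl⟩
    have hb : ((J * Q2T3 d δ).trace).re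
        ≤ ∑ v : Fin 3 → Fin d, ∑ w : Fin 3 → Fin d, ‖Q2T3 d δ w v‖ := by
      have htr : (J * Q2T3 d δ).trace
          = ∑ v : Fin 3 → Fin d, ∑ w : Fin 3 → Fin d, J v w * Q2T3 d δ w v := by
        simp [Matrix.trace, Matrix.diag, Matrix.mul_apply]
      calc ((J * Q2T3 d δ).trace).re
          ≤ ‖(J * Q2T3 d δ).trace‖ := Complex.re_le_norm _
        _ = ‖∑ v : Fin 3 → Fin d, ∑ w : Fin 3 → Fin d, J v w * Q2T3 d δ w v‖ := by
            rw [htr]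
        _ ≤ ∑ v : Fin 3 → Fin d, ‖∑ w : Fin 3 → Fin d, J v w * Q2T3 d δ w v‖ :=
            norm_sum_le _ _
        _ ≤ ∑ v : Fin 3 → Fin d, ∑ w : Fin 3 → Fin d, ‖J v w * Q2T3 d δ w v‖ :=
            Finset.sum_le_sum (fun v _ => norm_sum_le _ _)
        _ ≤ ∑ v : Fin 3 → Fin d, ∑ w : Fin 3 → Fin d, ‖Q2T3 d δ w v‖ := by
            refine Finset.sum_le_sum fun v _ => Finset.sum_le_sum fun w _ => ?_
            rw [norm_mul]
            calc ‖J v w‖ * ‖Q2T3 d δ w v‖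
                ≤ 1 * ‖Q2T3 d δ w v‖ :=
                  mul_le_mul_of_nonneg_right (aux_entry_le_one hJ1 hJ2 v w) (by positivity)
              _ = ‖Q2T3 d δ w v‖ := one_mul _
    exact (div_le_div_iff_of_pos_right hp).mpr hb
  · -- the `q` feasible set is nonempty
    refine ⟨(((((q/(d:ℝ)) : ℝ) : ℂ) • (1 : Matrix (Fin 3 → Fin d) (Fin 3 → Fin d) ℂ)
        * Q2T3 d δ).trace).re / q,
      (((q/(d:ℝ)) : ℝ) : ℂ) • 1, aux_psd_smul Matrix.PosSemidef.one (by positivity), ?_, ?_, rfl⟩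
    · have hkey : (1 : Matrix (Fin 2 → Fin d) (Fin 2 → Fin d) ℂ)
          - ptr3 ((((q/(d:ℝ)) : ℝ) : ℂ) • 1) = (((1 - q : ℝ) : ℂ)) • 1 := by
        rw [aux_ptr3_smul, aux_ptr3_one, smul_smul]
        have hc : (((q/(d:ℝ)) : ℝ) : ℂ) * ((d:ℕ) : ℂ) = (q : ℂ) := by
          push_cast
          field_simp
        rw [hc]
        push_cast
        rw [sub_smul, one_smul]
      rw [hkey]
      exact aux_psd_smul Matrix.PosSemidef.one (by linarith)
    · rw [Matrix.smul_mul, one_mul, Matrix.trace_smul, aux_trace_R2 hd1, smul_eq_mul]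
      push_cast
      field_simp
  · -- inclusion of the `q` feasible set into the `p` feasible set
    rintro x ⟨J, hJ1, hJ2, hJ3, rfl⟩
    have hpq0 : 0 ≤ p / q := by positivity
    have hpq1 : p / q ≤ 1 := (div_le_one hq0).mpr hpq
    refine ⟨(((p/q : ℝ)) : ℂ) • J, aux_psd_smul hJ1 hpq0, ?_, ?_, ?_⟩
    · have hkey : (1 : Matrix (Fin 2 → Fin d) (Fin 2 → Fin d) ℂ)
          - ptr3 ((((p/q : ℝ)) : ℂ) • J)
          = (((1 - p/q : ℝ)) : ℂ) • (1 : Matrix (Fin 2 → Fin d) (Fin 2 → Fin d) ℂ)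
            + (((p/q : ℝ)) : ℂ) • ((1 : Matrix (Fin 2 → Fin d) (Fin 2 → Fin d) ℂ) - ptr3 J) := by
        rw [aux_ptr3_smul]
        push_cast
        module
      rw [hkey]
      exact (aux_psd_smul Matrix.PosSemidef.one (by linarith)).add (aux_psd_smul hJ2 hpq0)
    · rw [Matrix.smul_mul, Matrix.trace_smul, hJ3, smul_eq_mul]
      push_cast
      field_simp
    · rw [Matrix.smul_mul, Matrix.trace_smul, smul_eq_mul]
      rw [Complex.re_ofReal_mul]
      field_simp
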